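/- Let G be a well-covered graph with no isolated vertices. Then G belongs to the class W₂ if and only if every vertex of G is a shedding vertex. -/
import Mathlib


variable {V : Type*}

/-- `S` is an independent set of `G`. -/
def IndepSet (G : SimpleGraph V) (S : Set V) : Prop :=
  ∀ ⦃a⦄, a ∈ S → ∀ ⦃b⦄, b ∈ S → ¬ G.Adj a b

/-- `S` is a maximal independent set of `G`. -/
def MaxIndepSet (G : SimpleGraph V) (S : Set V) : Prop :=
  IndepSet G S ∧ ∀ T : Set V, IndepSet G T → S ⊆ T → S = T

/-- The closed neighborhood `N[S]` of a set of vertices. -/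
def ClosedNbhd (G : SimpleGraph V) (S : Set V) : Set V :=
  S ∪ {u | ∃ s ∈ S, G.Adj s u}

/-- `v` is a shedding vertex of `G`. -/
def Shedding (G : SimpleGraph V) (v : V) : Prop :=
  ∀ S : Set V, S ⊆ (G.neighborSet v ∪ {v})ᶜ → IndepSet G S →
    ∃ u ∈ G.neighborSet v, IndepSet G (S ∪ {u})

/-- `N₂(v)`: vertices at distance exactly 2 from `v`. -/
def N2 (G : SimpleGraph V) (v : V) : Set V := {u | G.dist v u = 2}

/-- The edge `xy` is relating in `G`. -/
def Relating (G : SimpleGraph V) (x y : V) : Prop :=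
  ∃ S : Set V, IndepSet G S ∧ MaxIndepSet G (S ∪ {x}) ∧ MaxIndepSet G (S ∪ {y})

/-- `G` contains a cycle of length `k` as a (not necessarily induced) subgraph. -/
def CycleLen (G : SimpleGraph V) (k : ℕ) : Prop :=
  ∃ f : ZMod k → V, Function.Injective f ∧ ∀ i : ZMod k, G.Adj (f i) (f (i + 1))

/-- `S` is a maximum independent set of `G`. -/
def MaximumIndepSet (G : SimpleGraph V) (S : Set V) : Prop :=
  IndepSet G S ∧ ∀ T : Set V, IndepSet G T → T.ncard ≤ S.ncard

lemma indep_mono {G : SimpleGraph V} {A B : Set V} (h : A ⊆ B) (hB : IndepSet G B) :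
    IndepSet G A := fun a ha b hb => hB (h ha) (h hb)

lemma improve [Fintype V] {G : SimpleGraph V} (hshed : ∀ v, Shedding G v)
    {A B : Set V} (hA : IndepSet G A) (hB : IndepSet G B) (hd : Disjoint A B)
    (hnm : ¬ MaxIndepSet G A) :
    ∃ A2 : Set V, A ⊆ A2 ∧ IndepSet G A2 ∧ Disjoint A2 B ∧ A2.ncard = A.ncard + 1 := by
  simp only [MaxIndepSet, not_and, not_forall] at hnm
  obtain ⟨T, hT, hAT, hne⟩ := hnm hA
  obtain ⟨w, hwT, hwA⟩ := Set.exists_of_ssubset (hAT.ssubset_of_ne hne)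
  have hAw : IndepSet G (A ∪ {w}) :=
    indep_mono (Set.union_subset hAT (Set.singleton_subset_iff.mpr hwT)) hT
  by_cases hwB : w ∈ B
  · -- use shedding at w
    obtain ⟨u, hu, hAu⟩ := hshed w A (by
      intro a ha
      simp only [Set.mem_compl_iff, Set.mem_union, SimpleGraph.mem_neighborSet,
        Set.mem_singleton_iff]
      push_neg
      refine ⟨hAw (Or.inr rfl) (Or.inl ha), fun h => hwA (h ▸ ha)⟩)
      (indep_mono Set.subset_union_left hAw)
    have huA : u ∉ A := fun h => hAw (Or.inr rfl) (Or.inl h) hu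
    have huB : u ∉ B := fun h => hB hwB h hu
    refine ⟨A ∪ {u}, Set.subset_union_left, hAu, ?_, ?_⟩
    · exact Set.disjoint_union_left.mpr ⟨hd, Set.disjoint_singleton_left.mpr huB⟩
    · rw [Set.union_singleton, Set.ncard_insert_of_notMem huA A.toFinite]
  · refine ⟨A ∪ {w}, Set.subset_union_left, hAw, ?_, ?_⟩
    · exact Set.disjoint_union_left.mpr ⟨hd, Set.disjoint_singleton_left.mpr hwB⟩
    · rw [Set.union_singleton, Set.ncard_insert_of_notMem hwA A.toFinite]

lemma extend_pair [Fintype V] {G : SimpleGraph V} (hshed : ∀ v, Shedding G v) :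
    ∀ n (A B : Set V), IndepSet G A → IndepSet G B → Disjoint A B →
      2 * Fintype.card V ≤ n + A.ncard + B.ncard →
      ∃ A' B' : Set V, A ⊆ A' ∧ B ⊆ B' ∧ Disjoint A' B' ∧
        MaxIndepSet G A' ∧ MaxIndepSet G B' := by
  intro n
  induction n with
  | zero =>
    intro A B hA hB hd hcard
    have hsum : A.ncard + B.ncard ≤ Fintype.card V := by
      rw [← Set.ncard_union_eq hd A.toFinite B.toFinite]
      calc (A ∪ B).ncard ≤ (Set.univ : Set V).ncard :=
            Set.ncard_le_ncard (Set.subset_univ _) Set.finite_univ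
        _ = Fintype.card V := by rw [Set.ncard_univ, Nat.card_eq_fintype_card]
    have hc0 : Fintype.card V = 0 := by omega
    have : IsEmpty V := Fintype.card_eq_zero_iff.mp hc0
    have hmax : ∀ S : Set V, IndepSet G S → MaxIndepSet G S := by
      intro S hS
      exact ⟨hS, fun T _ _ => by
        rw [Set.eq_empty_of_isEmpty S, Set.eq_empty_of_isEmpty T]⟩
    exact ⟨A, B, subset_rfl, subset_rfl, hd, hmax A hA, hmax B hB⟩
  | succ n ih =>
    intro A B hA hB hd hcard
    by_cases hAm : MaxIndepSet G A
    · by_cases hBm : MaxIndepSet G B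
      · exact ⟨A, B, subset_rfl, subset_rfl, hd, hAm, hBm⟩
      · obtain ⟨B2, hBB2, hB2, hd2, hcard2⟩ := improve hshed hB hA hd.symm hBm
        obtain ⟨B', A', h1, h2, h3, h4, h5⟩ := ih B2 A hB2 hA hd2 (by omega)
        exact ⟨A', B', h2, hBB2.trans h1, h3.symm, h5, h4⟩
    · obtain ⟨A2, hAA2, hA2, hd2, hcard2⟩ := improve hshed hA hB hd hAm
      obtain ⟨A', B', h1, h2, h3, h4, h5⟩ := ih A2 B hA2 hB hd2 (by omega)
      exact ⟨A', B', hAA2.trans h1, h2, h3, h4, h5⟩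

theorem w2_iff_all_shedding [Fintype V] (G : SimpleGraph V)
    (hni : ∀ v : V, ∃ u : V, G.Adj v u)
    (hwc : ∀ S : Set V, MaxIndepSet G S → MaximumIndepSet G S) :
    (∀ A B : Set V, IndepSet G A → IndepSet G B → Disjoint A B →
      ∃ A' B' : Set V, A ⊆ A' ∧ B ⊆ B' ∧ Disjoint A' B' ∧
        MaximumIndepSet G A' ∧ MaximumIndepSet G B') ↔
    (∀ v : V, Shedding G v) := by
  constructor
  · -- W₂ ⇒ all shedding
    intro hw2 v S hScompl hS
    have hvS : v ∉ S := fun h => by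
      have := hScompl h
      simp [Set.mem_compl_iff] at this
    have hvI : IndepSet G {v} := by
      intro a ha b hb
      rw [Set.mem_singleton_iff] at ha hb
      subst ha; subst hb; exact G.irrefl
    obtain ⟨A', B', hvA', hSB', hdisj, hAmax, hBmax⟩ :=
      hw2 {v} S hvI hS (Set.disjoint_singleton_left.mpr hvS)
    have hvB' : v ∉ B' := fun h =>
      Set.disjoint_left.mp hdisj (hvA' rfl) h
    -- B' ∪ {v} is not independent
    have hnotind : ¬ IndepSet G (B' ∪ {v}) := by
      intro hind
      have hcard : (B' ∪ {v}).ncard ≤ B'.ncard := hBmax.2 _ hind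
      rw [Set.union_singleton, Set.ncard_insert_of_notMem hvB' B'.toFinite] at hcard
      omega
    simp only [IndepSet, not_forall, not_not] at hnotind
    obtain ⟨a, ha, b, hb, hab⟩ := hnotind
    rcases ha with ha | ha
    · rcases hb with hb | hb
      · exact absurd hab (hBmax.1 ha hb)
      · rw [Set.mem_singleton_iff] at hb; subst hb
        refine ⟨a, hab.symm, indep_mono ?_ hBmax.1⟩
        exact Set.union_subset hSB' (Set.singleton_subset_iff.mpr ha)
    · rw [Set.mem_singleton_iff] at ha; subst ha
      rcases hb with hb | hb
      · refine ⟨b, hab, indep_mono ?_ hBmax.1⟩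
        exact Set.union_subset hSB' (Set.singleton_subset_iff.mpr hb)
      · rw [Set.mem_singleton_iff] at hb; subst hb
        exact absurd hab G.irrefl
  · -- all shedding ⇒ W₂
    intro hshed A B hA hB hd
    obtain ⟨A', B', h1, h2, h3, h4, h5⟩ :=
      extend_pair hshed (2 * Fintype.card V) A B hA hB hd (by omega)
    exact ⟨A', B', h1, h2, h3, hwc A' h4, hwc B' h5⟩
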